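/- Let γ, σ² : [0,1] → ℝ be continuous with σ²(u) > 0 for all u ∈ [0,1] (condition (UE)), let Γ(u) := ∫₀^u γ(v) dv, g := ∫₀¹ γ(v) dv, assume (E1): Γ(u) − g·u > 0 for all u ∈ (0,1), let Ψ(u) := ∫_{1/2}^u σ²(v)/(2(Γ(v) − g·v)) dv, p_c := 2(g − γ(1))/σ²(1), q_c := 2(γ(0) − g)/σ²(0), and suppose p_c > 1 (so that Z̄ := ∫₀¹ exp(Ψ(u)) du < +∞). Define the capital density μ̄(u) := exp(Ψ(1−u))/Z̄ for u ∈ (0,1). Then: (i) lim_{u→0⁺} log μ̄(u)/log u = −1/p_c (so the capital distribution curve is linear with slope −1/p_c ∈ (−1,0) near 0); (ii) log μ̄(u) → −∞ as u → 1⁻; and (iii) if q_c > 0, then lim_{u→1⁻} log μ̄(u)/log(1−u) = 1/q_c. -/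

import Mathlib

open MeasureTheory Set Filter Topology

/-- `Γ(u) = ∫₀^u γ(v) dv`. -/
noncomputable def Gam (γ : ℝ → ℝ) (u : ℝ) : ℝ := ∫ v in (0:ℝ)..u, γ v

/-- market mean growth rate `g = ∫₀¹ γ(v) dv`. -/
noncomputable def mg (γ : ℝ → ℝ) : ℝ := ∫ v in (0:ℝ)..1, γ v

/-- `Ψ(u) = ∫_{1/2}^u σ²(v) / (2 (Γ(v) - g v)) dv`. -/
noncomputable def Psi (γ σ2 : ℝ → ℝ) (u : ℝ) : ℝ :=
  ∫ v in (1/2:ℝ)..u, σ2 v / (2 * (Gam γ v - mg γ * v))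

/-- critical diversity index `p_c = 2 (g - γ(1)) / σ²(1)`. -/
noncomputable def pcrit (γ σ2 : ℝ → ℝ) : ℝ := 2 * (mg γ - γ 1) / σ2 1

/-- critical index `q_c = 2 (γ(0) - g) / σ²(0)`. -/
noncomputable def qcrit (γ σ2 : ℝ → ℝ) : ℝ := 2 * (γ 0 - mg γ) / σ2 0

/-- the capital density μ̄(u) = exp(Ψ(1-u)) / Z̄ with Z̄ = ∫₀¹ exp(Ψ(u)) du. -/
noncomputable def mubar (γ σ2 : ℝ → ℝ) (u : ℝ) : ℝ :=
  Real.exp (Psi γ σ2 (1 - u)) / ∫ v in Set.Ioo (0:ℝ) 1, Real.exp (Psi γ σ2 v)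

section helpers

private lemma tendsto_one_sub_Iio : Tendsto (fun u : ℝ => 1 - u) (𝓝[<] 1) (𝓝[>] 0) := by
  rw [tendsto_nhdsWithin_iff]
  constructor
  · have : Tendsto (fun x : ℝ => 1 - x) (𝓝 1) (𝓝 (1 - 1)) :=
      (continuous_const.sub continuous_id).tendsto 1
    simp only [sub_self] at this
    exact this.mono_left nhdsWithin_le_nhds
  · filter_upwards [self_mem_nhdsWithin] with x hx
    simp only [mem_Iio] at hx
    exact mem_Ioi.2 (by linarith)

private lemma tendsto_one_sub_Ioi : Tendsto (fun u : ℝ => 1 - u) (𝓝[>] 0) (𝓝[<] 1) := by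
  rw [tendsto_nhdsWithin_iff]
  constructor
  · have : Tendsto (fun x : ℝ => 1 - x) (𝓝 0) (𝓝 (1 - 0)) :=
      (continuous_const.sub continuous_id).tendsto 0
    simp only [sub_zero] at this
    exact this.mono_left nhdsWithin_le_nhds
  · filter_upwards [self_mem_nhdsWithin] with x hx
    simp only [mem_Ioi] at hx
    exact mem_Iio.2 (by linarith)

end helpers
set_option maxHeartbeats 1000000 in

private lemma lhop_left {a b L : ℝ} (hab : a < b) {F G f g : ℝ → ℝ}
    (hF : ∀ x ∈ Ioo a b, HasDerivAt F (f x) x)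
    (hG : ∀ x ∈ Ioo a b, HasDerivAt G (g x) x)
    (hg : ∀ x ∈ Ioo a b, 0 < g x)
    (hGtop : Tendsto G (𝓝[<] b) atTop)
    (hfg : Tendsto (fun x => f x / g x) (𝓝[<] b) (𝓝 L)) :
    Tendsto (fun x => F x / G x) (𝓝[<] b) (𝓝 L) := by
  rw [Metric.tendsto_nhds]
  intro ε hε
  have h1 : {x | |f x / g x - L| < ε/2} ∩ Ioo a b ∈ 𝓝[<] b := by
    refine inter_mem ?_ (Ioo_mem_nhdsLT hab)
    have := Metric.tendsto_nhds.1 hfg (ε/2) (by positivity)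
    exact (by simpa [Real.dist_eq] using this : ∀ᶠ x in 𝓝[<] b, |f x / g x - L| < ε/2)
  obtain ⟨l, hlb, hl⟩ := (mem_nhdsLT_iff_exists_Ioo_subset' hab).1 h1
  set u₁ : ℝ := max l ((a+b)/2) with hu₁def
  have hau₁ : a < u₁ := lt_max_of_lt_right (by linarith)
  have hu₁b : u₁ < b := max_lt hlb (by linarith)
  have hsub : Ioo u₁ b ⊆ Ioo a b := fun x hx => ⟨lt_trans hau₁ hx.1, hx.2⟩
  have hsub' : Ioo u₁ b ⊆ {x | |f x / g x - L| < ε/2} :=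
    fun x hx => (hl ⟨lt_of_le_of_lt (le_max_left _ _) hx.1, hx.2⟩).1
  have hico : Ico u₁ b ⊆ Ioo a b := fun x hx => ⟨lt_of_lt_of_le hau₁ hx.1, hx.2⟩
  have hfu : ∀ x ∈ Ioo u₁ b, f x ≤ (L + ε/2) * g x := by
    intro x hx
    have h2 := abs_lt.1 (show |f x / g x - L| < ε/2 from hsub' hx)
    have h3 := hg x (hsub hx)
    have := (div_lt_iff₀ h3).1 (by linarith [h2.2] : f x / g x < L + ε/2)
    linarith
  have hfl : ∀ x ∈ Ioo u₁ b, (L - ε/2) * g x ≤ f x := by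
    intro x hx
    have h2 := abs_lt.1 (show |f x / g x - L| < ε/2 from hsub' hx)
    have h3 := hg x (hsub hx)
    have := (lt_div_iff₀ h3).1 (by linarith [h2.1] : L - ε/2 < f x / g x)
    linarith
  have hmono : ∀ (c₁ c₂ : ℝ), (∀ x ∈ Ioo u₁ b, 0 ≤ c₁ * f x + c₂ * g x) →
      MonotoneOn (fun x => c₁ * F x + c₂ * G x) (Ico u₁ b) := by
    intro c₁ c₂ hc
    apply monotoneOn_of_deriv_nonneg (convex_Ico _ _)
    · intro x hx
      exact (((hF x (hico hx)).const_mul c₁).add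
        ((hG x (hico hx)).const_mul c₂)).continuousAt.continuousWithinAt
    · rw [interior_Ico]
      intro x hx
      exact (((hF x (hico (Ioo_subset_Ico_self hx))).const_mul c₁).add
        ((hG x (hico (Ioo_subset_Ico_self hx))).const_mul c₂)).differentiableAt.differentiableWithinAt
    · rw [interior_Ico]
      intro x hx
      rw [(show HasDerivAt (fun x => c₁ * F x + c₂ * G x) _ x from ((hF x (hico (Ioo_subset_Ico_self hx))).const_mul c₁).add
        ((hG x (hico (Ioo_subset_Ico_self hx))).const_mul c₂)).deriv]
      exact hc x hx
  have hup : MonotoneOn (fun x => (-1) * F x + (L + ε/2) * G x) (Ico u₁ b) :=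
    hmono _ _ (fun x hx => by nlinarith [hfu x hx])
  have hdown : MonotoneOn (fun x => 1 * F x + (-(L - ε/2)) * G x) (Ico u₁ b) :=
    hmono _ _ (fun x hx => by nlinarith [hfl x hx])
  set Cp : ℝ := (-1) * F u₁ + (L + ε/2) * G u₁ with hCp
  set Cm : ℝ := 1 * F u₁ + (-(L - ε/2)) * G u₁ with hCm
  set K : ℝ := |Cp| + |Cm| with hK
  clear_value Cp Cm K
  have hK0 : 0 ≤ K := by rw [hK]; positivity
  have hGev : ∀ᶠ x in 𝓝[<] b, 1 + 4*K/ε ≤ G x := hGtop.eventually_ge_atTop _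
  filter_upwards [hGev, Ioo_mem_nhdsLT hu₁b] with x hGx hx
  have hGpos : 0 < G x := by
    have : (0:ℝ) ≤ 4*K/ε := by positivity
    linarith
  have hu₁mem : u₁ ∈ Ico u₁ b := ⟨le_refl _, hu₁b⟩
  have hxmem : x ∈ Ico u₁ b := ⟨le_of_lt hx.1, hx.2⟩
  have h5 := hup hu₁mem hxmem (le_of_lt hx.1)
  have h6 := hdown hu₁mem hxmem (le_of_lt hx.1)
  simp only at h5 h6
  have hKb : K ≤ ε * G x / 4 := by
    have h8 : ε * (1 + 4*K/ε) ≤ ε * G x := by nlinarith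
    have h7 : ε * (4*K/ε) = 4*K := by field_simp
    nlinarith [h8, h7]
  have e1 : -Cp ≤ K := by
    nlinarith [neg_abs_le Cp, abs_nonneg Cm, hK]
  have e1' : -Cm ≤ K := by
    nlinarith [neg_abs_le Cm, abs_nonneg Cp, hK]
  have e2 : F x ≤ (L + ε/2) * G x - Cp := by
    nlinarith [h5, hCp]
  have e3 : (L - ε/2) * G x + Cm ≤ F x := by
    nlinarith [h6, hCm]
  have hub : F x / G x ≤ L + 3*ε/4 := by
    rw [div_le_iff₀ hGpos]
    nlinarith [e1, e2, hKb]
  have hlb2 : L - 3*ε/4 ≤ F x / G x := by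
    rw [le_div_iff₀ hGpos]
    nlinarith [e1', e3, hKb]
  rw [Real.dist_eq, abs_lt]
  constructor <;> linarith

private lemma lhop_right {a b L : ℝ} (hab : a < b) {F G f g : ℝ → ℝ}
    (hF : ∀ x ∈ Ioo a b, HasDerivAt F (f x) x)
    (hG : ∀ x ∈ Ioo a b, HasDerivAt G (g x) x)
    (hg : ∀ x ∈ Ioo a b, g x < 0)
    (hGtop : Tendsto G (𝓝[>] a) atTop)
    (hfg : Tendsto (fun x => f x / g x) (𝓝[>] a) (𝓝 L)) :
    Tendsto (fun x => F x / G x) (𝓝[>] a) (𝓝 L) := by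
  have hmem : ∀ x ∈ Ioo a b, a + b - x ∈ Ioo a b := by
    intro x hx; exact ⟨by linarith [hx.2], by linarith [hx.1]⟩
  have hrefl : Tendsto (fun x : ℝ => a + b - x) (𝓝[<] b) (𝓝[>] a) := by
    rw [tendsto_nhdsWithin_iff]
    constructor
    · have : Tendsto (fun x : ℝ => a + b - x) (𝓝 b) (𝓝 (a + b - b)) :=
        (continuous_const.sub continuous_id).tendsto b
      simp only [add_sub_cancel_right] at this
      exact this.mono_left nhdsWithin_le_nhds
    · filter_upwards [self_mem_nhdsWithin] with x hx
      simp only [mem_Iio] at hx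
      exact mem_Ioi.2 (by linarith)
  have hrefl' : Tendsto (fun x : ℝ => a + b - x) (𝓝[>] a) (𝓝[<] b) := by
    rw [tendsto_nhdsWithin_iff]
    constructor
    · have : Tendsto (fun x : ℝ => a + b - x) (𝓝 a) (𝓝 (a + b - a)) :=
        (continuous_const.sub continuous_id).tendsto a
      simp only [add_sub_cancel_left] at this
      exact this.mono_left nhdsWithin_le_nhds
    · filter_upwards [self_mem_nhdsWithin] with x hx
      simp only [mem_Ioi] at hx
      exact mem_Iio.2 (by linarith)
  have key : Tendsto (fun x => F (a + b - x) / G (a + b - x)) (𝓝[<] b) (𝓝 L) := by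
    apply lhop_left hab (f := fun x => -f (a + b - x)) (g := fun x => -g (a + b - x))
    · intro x hx
      have := (hF _ (hmem x hx)).comp x
        (((hasDerivAt_id x).const_sub (a+b)) : HasDerivAt (fun y : ℝ => a + b - y) (-1) x)
      simp at this; exact this
    · intro x hx
      have := (hG _ (hmem x hx)).comp x
        (((hasDerivAt_id x).const_sub (a+b)) : HasDerivAt (fun y : ℝ => a + b - y) (-1) x)
      simp at this; exact this
    · intro x hx
      simpa using neg_pos.2 (hg _ (hmem x hx))
    · exact hGtop.comp hrefl
    · have := hfg.comp hrefl
      simp only [Function.comp_def] at this ⊢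
      convert this using 2 with x
      rw [neg_div_neg_eq]
  have := key.comp hrefl'
  simp only [Function.comp_def] at this
  convert this using 3 with x
  · ring_nf
  · ring_nf

set_option maxHeartbeats 2000000 in
/-- under (UE), (E1) and p_c > 1 the capital density μ̄ satisfies
(i) log μ̄(u)/log u → -1/p_c ∈ (-1,0) as u → 0⁺; (ii) log μ̄(u) → -∞ as u → 1⁻;
(iii) if q_c > 0, log μ̄(u)/log(1-u) → 1/q_c as u → 1⁻. -/
theorem stmt16 (γ σ2 : ℝ → ℝ) (hγc : ContinuousOn γ (Set.Icc 0 1))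
    (hσc : ContinuousOn σ2 (Set.Icc 0 1)) (hUE : ∀ u ∈ Set.Icc (0:ℝ) 1, 0 < σ2 u)
    (hE1 : ∀ u ∈ Set.Ioo (0:ℝ) 1, 0 < Gam γ u - mg γ * u)
    (hpc : 1 < pcrit γ σ2) :
    Filter.Tendsto (fun u => Real.log (mubar γ σ2 u) / Real.log u)
        (nhdsWithin 0 (Set.Ioi 0)) (nhds (-(1 / pcrit γ σ2))) ∧
      (-(1 / pcrit γ σ2)) ∈ Set.Ioo (-1 : ℝ) 0 ∧
      Filter.Tendsto (fun u => Real.log (mubar γ σ2 u))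
        (nhdsWithin 1 (Set.Iio 1)) Filter.atBot ∧
      (0 < qcrit γ σ2 →
        Filter.Tendsto (fun u => Real.log (mubar γ σ2 u) / Real.log (1 - u))
          (nhdsWithin 1 (Set.Iio 1)) (nhds (1 / qcrit γ σ2))) := by
  set hh : ℝ → ℝ := fun v => Gam γ v - mg γ * v with hhdef
  set ff : ℝ → ℝ := fun v => σ2 v / (2 * hh v) with ffdef
  have hσ1 : 0 < σ2 1 := hUE 1 (by norm_num)
  have hσ0 : 0 < σ2 0 := hUE 0 (by norm_num)
  have hpc0 : 0 < pcrit γ σ2 := lt_trans one_pos hpc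
  have hgγ1 : 0 < mg γ - γ 1 := by
    rcases div_pos_iff.1 (show 0 < 2 * (mg γ - γ 1) / σ2 1 from hpc0) with ⟨h1, _⟩ | ⟨_, h2⟩
    · linarith
    · linarith
  -- continuity of Γ and h
  have hγint : IntegrableOn γ (uIcc 0 1) volume := by
    rw [uIcc_of_le (by norm_num : (0:ℝ) ≤ 1)]
    exact hγc.integrableOn_Icc
  have hGamC : ContinuousOn (Gam γ) (Icc 0 1) := by
    have := intervalIntegral.continuousOn_primitive_interval hγint
    rwa [uIcc_of_le (by norm_num : (0:ℝ) ≤ 1)] at this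
  have hhC : ContinuousOn hh (Icc 0 1) :=
    hGamC.sub ((continuous_const.mul continuous_id).continuousOn)
  have hE1' : ∀ v ∈ Ioo (0:ℝ) 1, 0 < hh v := hE1
  -- continuity and integrability of the integrand ff
  have hfCA : ∀ x ∈ Ioo (0:ℝ) 1, ContinuousAt ff x := by
    intro x hx
    have h1 : ContinuousAt σ2 x := hσc.continuousAt (Icc_mem_nhds hx.1 hx.2)
    have h2 : ContinuousAt hh x := hhC.continuousAt (Icc_mem_nhds hx.1 hx.2)
    exact h1.div (continuousAt_const.mul h2) (by have := hE1' x hx; positivity)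
  have hffCIoo : ContinuousOn ff (Ioo 0 1) := fun y hy => (hfCA y hy).continuousWithinAt
  have hffI : ∀ c d : ℝ, c ∈ Ioo (0:ℝ) 1 → d ∈ Ioo (0:ℝ) 1 →
      IntervalIntegrable ff volume c d := by
    intro c d hc hd
    apply ContinuousOn.intervalIntegrable
    have hsub : uIcc c d ⊆ Ioo 0 1 := by
      rw [Set.uIcc]
      exact Icc_subset_Ioo (lt_min hc.1 hd.1) (max_lt hc.2 hd.2)
    exact hffCIoo.mono hsub
  have h12 : (1/2:ℝ) ∈ Ioo (0:ℝ) 1 := by norm_num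
  -- the derivative of Psi
  have hPsiD : ∀ x ∈ Ioo (0:ℝ) 1, HasDerivAt (Psi γ σ2) (ff x) x := by
    intro x hx
    exact intervalIntegral.integral_hasDerivAt_right (hffI _ _ h12 hx)
      ⟨Ioo 0 1, isOpen_Ioo.mem_nhds hx, hffCIoo.aestronglyMeasurable measurableSet_Ioo⟩
      (hfCA x hx)
  have hPsiCont : ContinuousOn (Psi γ σ2) (Ioo 0 1) :=
    fun x hx => ((hPsiD x hx).continuousAt).continuousWithinAt
  have hffpos : ∀ x ∈ Ioo (0:ℝ) 1, 0 < ff x := by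
    intro x hx
    have := hE1' x hx
    have := hUE x (Ioo_subset_Icc_self hx)
    positivity
  have hPsiMono : MonotoneOn (Psi γ σ2) (Ioo 0 1) := by
    apply monotoneOn_of_deriv_nonneg (convex_Ioo _ _) hPsiCont
    · rw [interior_Ioo]
      exact fun x hx => (hPsiD x hx).differentiableAt.differentiableWithinAt
    · rw [interior_Ioo]
      intro x hx
      rw [(hPsiD x hx).deriv]
      exact le_of_lt (hffpos x hx)
  -- slope limits of hh at the endpoints
  have hh1 : hh 1 = 0 := by
    show Gam γ 1 - mg γ * 1 = 0
    rw [mul_one]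
    exact sub_eq_zero.2 rfl
  have hh0 : hh 0 = 0 := by
    show Gam γ 0 - mg γ * 0 = 0
    rw [mul_zero, sub_zero]
    exact intervalIntegral.integral_same
  have hGamD1 : HasDerivWithinAt (Gam γ) (γ 1) (Iic 1) 1 := by
    have h1 : (𝓝[Iic (1:ℝ)] 1) = 𝓝[Icc (0:ℝ) 1] 1 :=
      (nhdsWithin_Icc_eq_nhdsLE (by norm_num : (0:ℝ) < 1)).symm
    refine intervalIntegral.integral_hasDerivWithinAt_right hγint.intervalIntegrable
      (t := Iic 1) ?_ ?_
    · rw [h1]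
      exact ⟨Icc 0 1, self_mem_nhdsWithin, hγc.aestronglyMeasurable measurableSet_Icc⟩
    · rw [ContinuousWithinAt, h1]
      exact hγc.continuousWithinAt (by norm_num)
  have hGamD0 : HasDerivWithinAt (Gam γ) (γ 0) (Ici 0) 0 := by
    have h1 : (𝓝[Ioi (0:ℝ)] 0) = 𝓝[Ioo (0:ℝ) 1] 0 :=
      (nhdsWithin_Ioo_eq_nhdsGT (by norm_num : (0:ℝ) < 1)).symm
    refine intervalIntegral.integral_hasDerivWithinAt_right
      (intervalIntegrable_iff_integrableOn_Ioc_of_le (le_refl 0) |>.2 (by simp))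
      (t := Ioi 0) ?_ ?_
    · rw [h1]
      exact ⟨Ioo 0 1, self_mem_nhdsWithin,
        (hγc.mono Ioo_subset_Icc_self).aestronglyMeasurable measurableSet_Ioo⟩
    · rw [ContinuousWithinAt, h1]
      exact (hγc.continuousWithinAt (by norm_num)).mono_left
        (nhdsWithin_mono _ Ioo_subset_Icc_self)
  have hslope1 : Tendsto (fun v => hh v / (1 - v)) (𝓝[<] 1) (𝓝 (mg γ - γ 1)) := by
    have hd2 : HasDerivWithinAt hh (γ 1 - mg γ) (Iic 1) 1 := by
      have hlin : HasDerivWithinAt (fun v : ℝ => mg γ * v) (mg γ) (Iic 1) 1 := by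
        simpa using ((hasDerivAt_id (1:ℝ)).const_mul (mg γ)).hasDerivWithinAt (s := Iic 1)
      exact hGamD1.sub hlin
    rw [hasDerivWithinAt_iff_tendsto_slope, Iic_diff_right] at hd2
    have hneg := hd2.neg
    rw [neg_sub] at hneg
    refine hneg.congr' ?_
    filter_upwards [self_mem_nhdsWithin] with v hv
    rw [slope_def_field, hh1, sub_zero, show (1:ℝ) - v = -(v - 1) from by ring, div_neg]
  have hslope0 : Tendsto (fun v => hh v / v) (𝓝[>] 0) (𝓝 (γ 0 - mg γ)) := by
    have hd2 : HasDerivWithinAt hh (γ 0 - mg γ) (Ici 0) 0 := by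
      have hlin : HasDerivWithinAt (fun v : ℝ => mg γ * v) (mg γ) (Ici 0) 0 := by
        simpa using ((hasDerivAt_id (0:ℝ)).const_mul (mg γ)).hasDerivWithinAt (s := Ici 0)
      exact hGamD0.sub hlin
    rw [hasDerivWithinAt_iff_tendsto_slope, Ici_sdiff_left] at hd2
    refine hd2.congr' ?_
    filter_upwards [self_mem_nhdsWithin] with v hv
    rw [slope_def_field, hh0]
    simp
  -- limits of σ2 at the endpoints along the open interval
  have hσt1 : Tendsto σ2 (𝓝[<] 1) (𝓝 (σ2 1)) := by
    rw [← nhdsWithin_Ioo_eq_nhdsLT (by norm_num : (0:ℝ) < 1)]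
    exact (hσc.continuousWithinAt (by norm_num)).mono_left
      (nhdsWithin_mono _ Ioo_subset_Icc_self)
  have hσt0 : Tendsto σ2 (𝓝[>] 0) (𝓝 (σ2 0)) := by
    rw [← nhdsWithin_Ioo_eq_nhdsGT (by norm_num : (0:ℝ) < 1)]
    exact (hσc.continuousWithinAt (by norm_num)).mono_left
      (nhdsWithin_mono _ Ioo_subset_Icc_self)
  -- the key limit at 1  (L'Hôpital)
  have hE : Tendsto (fun u => Psi γ σ2 u / (-Real.log (1 - u))) (𝓝[<] 1)
      (𝓝 (1 / pcrit γ σ2)) := by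
    apply lhop_left (a := 0) (b := 1) (by norm_num) (f := ff) (g := fun x => 1/(1-x)) hPsiD
    · intro x hx
      have h1x : (1:ℝ) - x ≠ 0 := by have := hx.2; intro hc; linarith [hx.2]
      have hD : HasDerivAt (fun u : ℝ => Real.log (1-u)) ((1-x)⁻¹ * -1) x :=
        (Real.hasDerivAt_log h1x).comp x ((hasDerivAt_id x).const_sub 1)
      have := hD.neg
      refine this.congr_deriv ?_
      rw [one_div]; ring
    · intro x hx
      have : (0:ℝ) < 1 - x := by linarith [hx.2]
      positivity
    · exact tendsto_neg_atBot_atTop.comp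
        (Real.tendsto_log_nhdsGT_zero.comp tendsto_one_sub_Iio)
    · have hbase : Tendsto (fun v => σ2 v / (2 * (hh v / (1 - v)))) (𝓝[<] 1)
          (𝓝 (σ2 1 / (2 * (mg γ - γ 1)))) :=
        hσt1.div (tendsto_const_nhds.mul hslope1) (by positivity)
      have hconst : σ2 1 / (2 * (mg γ - γ 1)) = 1 / pcrit γ σ2 := by
        rw [pcrit, one_div_div]
      rw [← hconst]
      refine hbase.congr' ?_
      rw [← nhdsWithin_Ioo_eq_nhdsLT (by norm_num : (0:ℝ) < 1)]
      filter_upwards [self_mem_nhdsWithin] with x hx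
      have h1 : hh x ≠ 0 := ne_of_gt (hE1' x hx)
      have h2 : (1:ℝ) - x ≠ 0 := by have := hx.2; intro hc; linarith
      show σ2 x / (2 * (hh x / (1 - x))) = ff x / (1/(1-x))
      rw [ffdef]
      field_simp
  -- minimum of σ2 and upper bound for hh, for the divergence at 0
  obtain ⟨xm, hxm, hxmin⟩ := isCompact_Icc.exists_isMinOn
    (nonempty_Icc.2 (by norm_num : (0:ℝ) ≤ 1)) hσc
  set δ : ℝ := σ2 xm with hδdef
  have hδ : 0 < δ := hUE xm hxm
  have hδle : ∀ x ∈ Icc (0:ℝ) 1, δ ≤ σ2 x := fun x hx => hxmin hx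
  obtain ⟨Cb, hCb⟩ := isCompact_Icc.exists_bound_of_continuousOn hγc
  set M : ℝ := Cb + |mg γ| + 1 with hMdef
  have hM : 0 < M := by
    have h1 := hCb 0 (by norm_num)
    have h2 := norm_nonneg (γ 0)
    have h3 := abs_nonneg (mg γ)
    rw [hMdef]; linarith
  have hhub : ∀ v ∈ Ioc (0:ℝ) (1/2:ℝ), hh v ≤ M * v := by
    intro v hv
    have h1 : ‖∫ x in (0:ℝ)..v, γ x‖ ≤ Cb * |v - 0| := by
      apply intervalIntegral.norm_integral_le_of_norm_le_const
      intro x hx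
      rw [uIoc_of_le (le_of_lt hv.1)] at hx
      exact hCb x ⟨le_of_lt hx.1, le_trans hx.2 (by linarith [hv.2])⟩
    rw [Real.norm_eq_abs, sub_zero, abs_of_pos hv.1] at h1
    have h2 : Gam γ v ≤ Cb * v := le_trans (le_abs_self _) h1
    have h3 : -(mg γ * v) ≤ |mg γ| * v := by
      nlinarith [neg_abs_le (mg γ), hv.1]
    show Gam γ v - mg γ * v ≤ M * v
    rw [hMdef]
    nlinarith [hv.1]
  have hflb : ∀ v ∈ Ioc (0:ℝ) (1/2:ℝ), δ/(2*M) * (1/v) ≤ ff v := by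
    intro v hv
    have hvI : v ∈ Ioo (0:ℝ) 1 := ⟨hv.1, lt_of_le_of_lt hv.2 (by norm_num)⟩
    have hhv := hE1' v hvI
    have h1 : δ ≤ σ2 v := hδle v (Ioo_subset_Icc_self hvI)
    have h2 : δ / (2 * (M * v)) ≤ δ / (2 * hh v) := by
      apply div_le_div_of_nonneg_left (le_of_lt hδ) (by positivity)
      nlinarith [hhub v hv]
    have h3 : δ / (2 * hh v) ≤ σ2 v / (2 * hh v) :=
      (div_le_div_iff_of_pos_right (by positivity)).2 h1
    calc δ/(2*M) * (1/v) = δ / (2 * (M * v)) := by field_simp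
    _ ≤ δ / (2 * hh v) := h2
    _ ≤ σ2 v / (2 * hh v) := h3
  -- divergence of Psi at 0
  have hPsiBot : Tendsto (Psi γ σ2) (𝓝[>] 0) atBot := by
    set c : ℝ := δ/(2*M) with hcdef
    have hc : 0 < c := by rw [hcdef]; positivity
    have key : ∀ w ∈ Ioo (0:ℝ) (1/2:ℝ),
        Psi γ σ2 w ≤ c * Real.log w - c * Real.log (1/2) := by
      intro w hw
      have hwI : w ∈ Ioo (0:ℝ) 1 := ⟨hw.1, lt_trans hw.2 (by norm_num)⟩
      have hIf : IntervalIntegrable ff volume w (1/2) := hffI _ _ hwI h12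
      have hIg : IntervalIntegrable (fun v => c * (1/v)) volume w (1/2) := by
        apply ContinuousOn.intervalIntegrable
        apply continuousOn_const.mul
        apply continuousOn_const.div continuousOn_id
        intro x hx
        rw [uIcc_of_le (le_of_lt hw.2)] at hx
        exact ne_of_gt (lt_of_lt_of_le hw.1 hx.1)
      have hm := intervalIntegral.integral_mono_on (le_of_lt hw.2) hIg hIf
        (fun x hx => hflb x ⟨lt_of_lt_of_le hw.1 hx.1, hx.2⟩)
      have hcomp : ∫ v in w..(1/2:ℝ), c * (1/v) = c * Real.log ((1/2)/w) := by
        rw [intervalIntegral.integral_const_mul, integral_one_div]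
        intro hmem
        rw [uIcc_of_le (le_of_lt hw.2)] at hmem
        linarith [hmem.1, hw.1]
      have hPsiw : Psi γ σ2 w = -∫ v in w..(1/2:ℝ), ff v := by
        rw [← intervalIntegral.integral_symm]
        rfl
      rw [hPsiw]
      rw [hcomp] at hm
      rw [Real.log_div (by norm_num) (ne_of_gt hw.1)] at hm
      linarith [hm]
    have hb1 : Tendsto (fun w => c * Real.log w) (𝓝[>] (0:ℝ)) atBot :=
      Real.tendsto_log_nhdsGT_zero.const_mul_atBot hc
    have hb2 : Tendsto (fun w => c * Real.log w - c * Real.log (1/2)) (𝓝[>] (0:ℝ)) atBot := by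
      simpa [sub_eq_add_neg] using tendsto_atBot_add_const_right _ (-(c * Real.log (1/2))) hb1
    refine tendsto_atBot_mono' _ ?_ hb2
    filter_upwards [Ioo_mem_nhdsGT (show (0:ℝ) < 1/2 by norm_num)] with w hw
    exact key w hw
  -- Z̄ analysis
  set Zb : ℝ := ∫ v in Set.Ioo (0:ℝ) 1, Real.exp (Psi γ σ2 v) with hZbdef
  set r : ℝ := (1/pcrit γ σ2 + 1)/2 with hrdef
  have hp1 : 1/pcrit γ σ2 < 1 := (div_lt_one hpc0).2 hpc
  have hpcinv : 0 < 1/pcrit γ σ2 := one_div_pos.2 hpc0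
  have hrp : 1/pcrit γ σ2 < r := by rw [hrdef]; linarith
  have hr1 : r < 1 := by rw [hrdef]; linarith
  have hev : ∀ᶠ u in 𝓝[<] (1:ℝ), Real.exp (Psi γ σ2 u) ≤ (1-u) ^ (-r) := by
    filter_upwards [hE.eventually_lt_const hrp,
      Ioo_mem_nhdsLT (by norm_num : (0:ℝ) < 1)] with u hu huI
    have h1u : 0 < 1 - u := by linarith [huI.2]
    have hlogneg : Real.log (1-u) < 0 := Real.log_neg h1u (by linarith [huI.1])
    have hpos : 0 < -Real.log (1-u) := by linarith
    have h2 : Psi γ σ2 u < r * (-Real.log (1-u)) := by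
      have := (div_lt_iff₀ hpos).1 hu
      linarith
    rw [Real.rpow_def_of_pos h1u]
    apply le_of_lt
    apply Real.exp_lt_exp.2
    nlinarith [h2]
  obtain ⟨l0, hl0, hl0sub⟩ :=
    (mem_nhdsLT_iff_exists_Ioo_subset' (show (1/2:ℝ) < 1 by norm_num)).1 hev
  set u₀ : ℝ := max l0 (1/2) with hu₀def
  have hu₀1 : u₀ < 1 := max_lt hl0 (by norm_num)
  have hu₀0 : 0 < u₀ := lt_max_of_lt_right (by norm_num)
  have hu₀I : u₀ ∈ Ioo (0:ℝ) 1 := ⟨hu₀0, hu₀1⟩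
  have hbound : ∀ u ∈ Ioo u₀ (1:ℝ), Real.exp (Psi γ σ2 u) ≤ (1-u) ^ (-r) :=
    fun u hu => hl0sub ⟨lt_of_le_of_lt (le_max_left _ _) hu.1, hu.2⟩
  have hint1 : IntegrableOn (fun v => Real.exp (Psi γ σ2 v)) (Ioc 0 u₀) := by
    have hsub1 : Ioc (0:ℝ) u₀ ⊆ Ioo 0 1 := fun x hx => ⟨hx.1, lt_of_le_of_lt hx.2 hu₀1⟩
    refine Integrable.mono' (g := fun _ => Real.exp (Psi γ σ2 u₀))
      (integrableOn_const measure_Ioc_lt_top.ne) ?_ ?_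
    · exact (Real.continuous_exp.comp_continuousOn
        (hPsiCont.mono hsub1)).aestronglyMeasurable measurableSet_Ioc
    · rw [ae_restrict_iff' measurableSet_Ioc]
      refine Eventually.of_forall (fun x hx => ?_)
      rw [Real.norm_eq_abs, Real.abs_exp]
      exact Real.exp_le_exp.2 (hPsiMono (hsub1 hx) hu₀I hx.2)
  have hint2 : IntegrableOn (fun v => Real.exp (Psi γ σ2 v)) (Ioo u₀ 1) := by
    have hsub2 : Ioo u₀ (1:ℝ) ⊆ Ioo 0 1 := fun x hx => ⟨lt_trans hu₀0 hx.1, hx.2⟩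
    have hgint : IntegrableOn (fun u : ℝ => (1-u) ^ (-r)) (Ioo u₀ 1) := by
      have h1 : IntervalIntegrable (fun x : ℝ => x ^ (-r)) volume (1 - u₀) (1 - 1) :=
        intervalIntegral.intervalIntegrable_rpow' (by linarith)
      have h2 := h1.comp_sub_left 1
      simp only [sub_sub_cancel] at h2
      norm_num at h2
      exact (intervalIntegrable_iff_integrableOn_Ioo_of_le (le_of_lt hu₀1)).1 h2
    refine Integrable.mono' hgint ?_ ?_
    · exact (Real.continuous_exp.comp_continuousOn
        (hPsiCont.mono hsub2)).aestronglyMeasurable measurableSet_Ioo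
    · rw [ae_restrict_iff' measurableSet_Ioo]
      refine Eventually.of_forall (fun x hx => ?_)
      rw [Real.norm_eq_abs, Real.abs_exp]
      exact hbound x hx
  have hZint : IntegrableOn (fun v => Real.exp (Psi γ σ2 v)) (Ioo 0 1) := by
    refine (hint1.union hint2).mono_set ?_
    intro x hx
    by_cases hxu : x ≤ u₀
    · exact Or.inl ⟨hx.1, hxu⟩
    · exact Or.inr ⟨lt_of_not_ge hxu, hx.2⟩
  have hZpos : 0 < Zb := by
    rw [hZbdef]
    refine (setIntegral_pos_iff_support_of_nonneg_ae ?_ hZint).2 ?_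
    · exact Eventually.of_forall (fun x => le_of_lt (Real.exp_pos _))
    · have hsupp : Function.support (fun v => Real.exp (Psi γ σ2 v)) = univ := by
        ext x; simp [Real.exp_ne_zero]
      rw [hsupp, univ_inter, Real.volume_Ioo]
      norm_num
  have hlog : ∀ u, Real.log (mubar γ σ2 u) = Psi γ σ2 (1-u) - Real.log Zb := by
    intro u
    unfold mubar
    rw [← hZbdef, Real.log_div (Real.exp_ne_zero _) (ne_of_gt hZpos), Real.log_exp]
  -- part (i)
  have hP1 : Tendsto (fun u => Real.log (mubar γ σ2 u) / Real.log u) (𝓝[>] (0:ℝ))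
      (𝓝 (-(1/pcrit γ σ2))) := by
    have h1 : Tendsto (fun u => Psi γ σ2 (1-u) / (-Real.log u)) (𝓝[>] (0:ℝ))
        (𝓝 (1/pcrit γ σ2)) := by
      have := hE.comp tendsto_one_sub_Ioi
      simp only [Function.comp_def, sub_sub_cancel] at this
      exact this
    have h2 : Tendsto (fun u => Psi γ σ2 (1-u) / Real.log u) (𝓝[>] (0:ℝ))
        (𝓝 (-(1/pcrit γ σ2))) := by
      refine h1.neg.congr (fun x => ?_)
      rw [div_neg, neg_neg]
    have h3 : Tendsto (fun u => Real.log Zb / Real.log u) (𝓝[>] (0:ℝ)) (𝓝 0) := by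
      have hdiv : Tendsto (fun u => (-Real.log Zb) / (-Real.log u)) (𝓝[>] (0:ℝ)) (𝓝 0) :=
        Tendsto.div_atTop tendsto_const_nhds
          (tendsto_neg_atBot_atTop.comp Real.tendsto_log_nhdsGT_zero)
      exact hdiv.congr (fun x => neg_div_neg_eq _ _)
    have heq : (fun u => Real.log (mubar γ σ2 u) / Real.log u)
        = fun u => Psi γ σ2 (1-u)/Real.log u - Real.log Zb/Real.log u := by
      funext u; rw [hlog u, sub_div]
    rw [heq]
    simpa using h2.sub h3
  -- part (ii)
  have hP2 : Tendsto (fun u => Real.log (mubar γ σ2 u)) (𝓝[<] (1:ℝ)) atBot := by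
    have h1 : Tendsto (fun u : ℝ => Psi γ σ2 (1-u)) (𝓝[<] (1:ℝ)) atBot := by
      have := hPsiBot.comp tendsto_one_sub_Iio
      simpa [Function.comp_def] using this
    have h2 := tendsto_atBot_add_const_right _ (-Real.log Zb) h1
    refine h2.congr (fun u => ?_)
    rw [hlog u]
    ring
  -- part (iii)
  have hP3 : 0 < qcrit γ σ2 → Tendsto (fun u => Real.log (mubar γ σ2 u) / Real.log (1-u))
      (𝓝[<] (1:ℝ)) (𝓝 (1/qcrit γ σ2)) := by
    intro hqc
    have hγ0g : 0 < γ 0 - mg γ := by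
      rcases div_pos_iff.1 (show 0 < 2*(γ 0 - mg γ)/σ2 0 from hqc) with ⟨a1,_⟩|⟨_,a2⟩
      · linarith
      · linarith
    have hE' : Tendsto (fun w => Psi γ σ2 w / (-Real.log w)) (𝓝[>] (0:ℝ))
        (𝓝 (-(1/qcrit γ σ2))) := by
      apply lhop_right (a := 0) (b := 1) (by norm_num) (f := ff) (g := fun x => -(1/x)) hPsiD
      · intro x hx
        have := (Real.hasDerivAt_log (ne_of_gt hx.1)).neg
        refine this.congr_deriv ?_
        rw [one_div]
      · intro x hx
        have h0 : 0 < 1/x := by have := hx.1; positivity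
        linarith
      · exact tendsto_neg_atBot_atTop.comp Real.tendsto_log_nhdsGT_zero
      · have hbase : Tendsto (fun v => -(σ2 v / (2 * (hh v / v)))) (𝓝[>] (0:ℝ))
            (𝓝 (-(σ2 0 / (2*(γ 0 - mg γ))))) :=
          (hσt0.div (tendsto_const_nhds.mul hslope0) (by positivity)).neg
        have hconst : σ2 0 / (2*(γ 0 - mg γ)) = 1/qcrit γ σ2 := by rw [qcrit, one_div_div]
        rw [← hconst]
        refine hbase.congr' ?_
        rw [← nhdsWithin_Ioo_eq_nhdsGT (by norm_num : (0:ℝ) < 1)]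
        filter_upwards [self_mem_nhdsWithin] with x hx
        have h1 : hh x ≠ 0 := ne_of_gt (hE1' x hx)
        have h2 : x ≠ 0 := ne_of_gt hx.1
        show -(σ2 x / (2 * (hh x / x))) = ff x / (-(1/x))
        rw [ffdef]
        field_simp
    have h1 : Tendsto (fun w => Psi γ σ2 w / Real.log w) (𝓝[>] (0:ℝ))
        (𝓝 (1/qcrit γ σ2)) := by
      have h0 := hE'.neg
      rw [neg_neg] at h0
      refine h0.congr (fun x => ?_)
      rw [div_neg, neg_neg]
    have h2 : Tendsto (fun u => Psi γ σ2 (1-u) / Real.log (1-u)) (𝓝[<] (1:ℝ))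
        (𝓝 (1/qcrit γ σ2)) := by
      have := h1.comp tendsto_one_sub_Iio
      simp only [Function.comp_def] at this
      exact this
    have h3 : Tendsto (fun u => Real.log Zb / Real.log (1-u)) (𝓝[<] (1:ℝ)) (𝓝 0) := by
      have hdiv : Tendsto (fun u : ℝ => (-Real.log Zb) / (-Real.log (1-u))) (𝓝[<] (1:ℝ)) (𝓝 0) :=
        Tendsto.div_atTop tendsto_const_nhds (tendsto_neg_atBot_atTop.comp
          (Real.tendsto_log_nhdsGT_zero.comp tendsto_one_sub_Iio))
      exact hdiv.congr (fun x => neg_div_neg_eq _ _)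
    have heq : (fun u => Real.log (mubar γ σ2 u) / Real.log (1-u))
        = fun u => Psi γ σ2 (1-u)/Real.log (1-u) - Real.log Zb/Real.log (1-u) := by
      funext u; rw [hlog u, sub_div]
    rw [heq]
    simpa using h2.sub h3
  exact ⟨hP1, ⟨by linarith, by linarith⟩, hP2, hP3⟩
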